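/- The semiring ℕ∞ = ℕ ∪ {∞} (with n + ∞ = ∞ and m·∞ = ∞ for m ≠ 0, 0·∞ = 0) is atomistic. -/

import Mathlib

private lemma blocks_aux (g : ℕ → ℕ) : ∀ t p, p < ∑ j ∈ Finset.range t, g j →
    ∃ i, i < t ∧ (∑ j ∈ Finset.range i, g j) ≤ p ∧ p < ∑ j ∈ Finset.range (i + 1), g j := by
  intro t
  induction t with
  | zero => simp
  | succ t ih =>
    intro p hp
    by_cases hlt : p < ∑ j ∈ Finset.range t, g j
    · obtain ⟨i, hi, h1, h2⟩ := ih p hlt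
      exact ⟨i, Nat.lt_succ_of_lt hi, h1, h2⟩
    · exact ⟨t, Nat.lt_succ_self t, not_lt.1 hlt, hp⟩

private lemma card_fin_filter_Ico (N x y : ℕ) (hy : y ≤ N) :
    (Finset.univ.filter fun p : Fin N => x ≤ ↑p ∧ ↑p < y).card = (Finset.Ico x y).card := by
  refine Finset.card_bij (fun (p : Fin N) _ => (p : ℕ)) ?_ ?_ ?_
  · intro p hp
    simp only [Finset.mem_filter, Finset.mem_univ, true_and] at hp
    simp [Finset.mem_Ico, hp.1, hp.2]
  · intro p _ q _ hpq
    exact Fin.val_injective hpq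
  · intro q hq
    simp only [Finset.mem_Ico] at hq
    exact ⟨⟨q, lt_of_lt_of_le hq.2 hy⟩, by simp [hq.1, hq.2], rfl⟩

private lemma finSide {m : ℕ} (f : Fin m → ℕ) (N : ℕ) (hN : ∑ i, f i = N) :
    ∃ I : Fin m → Finset (Fin N),
      (∀ i i', i ≠ i' → Disjoint (I i) (I i')) ∧
      Finset.univ.biUnion I = Finset.univ ∧
      ∀ i, (I i).card = f i := by
  set g : ℕ → ℕ := fun t => if h : t < m then f ⟨t, h⟩ else 0 with hg
  set A : ℕ → ℕ := fun t => ∑ j ∈ Finset.range t, g j with hA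
  have hmono : Monotone A := fun s t hst =>
    Finset.sum_le_sum_of_subset (Finset.range_subset_range.2 hst)
  have hAm : A m = N := by
    rw [← hN]
    show ∑ j ∈ Finset.range m, g j = ∑ i, f i
    rw [← Fin.sum_univ_eq_sum_range]
    exact Finset.sum_congr rfl fun i _ => by simp [hg, i.isLt]
  refine ⟨fun i => Finset.univ.filter fun p : Fin N => A ↑i ≤ ↑p ∧ ↑p < A (↑i + 1), ?_, ?_, ?_⟩
  · intro i i' hne
    rw [Finset.disjoint_left]
    intro p hp hp'
    simp only [Finset.mem_filter, Finset.mem_univ, true_and] at hp hp'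
    rcases lt_or_gt_of_ne (fun hv : (i : ℕ) = ↑i' => hne (Fin.ext hv)) with hlt | hlt
    · exact absurd hp'.1 (not_le.2 (lt_of_lt_of_le hp.2 (hmono (Nat.succ_le_of_lt hlt))))
    · exact absurd hp.1 (not_le.2 (lt_of_lt_of_le hp'.2 (hmono (Nat.succ_le_of_lt hlt))))
  · ext p
    simp only [Finset.mem_biUnion, Finset.mem_univ, iff_true, true_and, Finset.mem_filter]
    have hp : (p : ℕ) < A m := hAm ▸ p.isLt
    obtain ⟨i, him, h1, h2⟩ := blocks_aux g m p hp
    exact ⟨⟨i, him⟩, h1, h2⟩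
  · intro i
    have hle : A (↑i + 1) ≤ N := hAm ▸ hmono (Nat.succ_le_of_lt i.isLt)
    rw [card_fin_filter_Ico N (A ↑i) (A (↑i + 1)) hle, Nat.card_Ico]
    show (∑ j ∈ Finset.range (↑i + 1), g j) - ∑ j ∈ Finset.range ↑i, g j = f i
    rw [Finset.sum_range_succ, Nat.add_sub_cancel_left]
    simp [hg, i.isLt]

/-- The semiring `ℕ∞ = ℕ ∪ {∞}` is atomistic. -/
theorem stmt_9 (m n : ℕ) (a : Fin m → ℕ∞) (b : Fin n → ℕ∞)
    (h : ∑ i, a i = ∑ j, b j) :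
    ∃ (k : ℕ) (c : Fin k → ℕ∞)
      (I : Fin m → Finset (Fin k)) (J : Fin n → Finset (Fin k)),
      (∀ i i', i ≠ i' → Disjoint (I i) (I i')) ∧
      (Finset.univ.biUnion I = Finset.univ) ∧
      (∀ j j', j ≠ j' → Disjoint (J j) (J j')) ∧
      (Finset.univ.biUnion J = Finset.univ) ∧
      (∀ i, a i = ∑ p ∈ I i, c p) ∧
      (∀ j, b j = ∑ q ∈ J j, c q) := by
  by_cases htop : ∑ i, a i = ⊤
  · -- infinite case
    obtain ⟨i0, -, hi0⟩ := WithTop.sum_eq_top.1 htop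
    obtain ⟨j0, -, hj0⟩ := WithTop.sum_eq_top.1 (h ▸ htop)
    set M : Fin m → Fin n → ℕ∞ := fun i j =>
      if a i = ⊤ then (if b j = ⊤ then ⊤ else if i = i0 then b j else 0)
      else if j = j0 then a i else 0 with hM
    have hrow : ∀ i, ∑ j, M i j = a i := by
      intro i
      by_cases hai : a i = ⊤
      · rw [hai]
        exact WithTop.sum_eq_top.2 ⟨j0, Finset.mem_univ _, by simp [hM, hai, show b j0 = (⊤ : ℕ∞) from hj0]; rfl⟩
      · calc ∑ j, M i j = ∑ j, if j = j0 then a i else 0 :=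
              Finset.sum_congr rfl fun j _ => by simp [hM, hai]
          _ = a i := by simp
    have hcol : ∀ j, ∑ i, M i j = b j := by
      intro j
      by_cases hbj : b j = ⊤
      · rw [hbj]
        exact WithTop.sum_eq_top.2 ⟨i0, Finset.mem_univ _, by simp [hM, show a i0 = (⊤ : ℕ∞) from hi0, hbj]; rfl⟩
      · have hjj0 : j ≠ j0 := fun e => hbj (e ▸ hj0)
        calc ∑ i, M i j = ∑ i, if i = i0 then b j else 0 := by
              refine Finset.sum_congr rfl fun i _ => ?_
              by_cases hai : a i = ⊤
              · simp [hM, hai, hbj]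
              · have hii0 : i ≠ i0 := fun e => hai (e ▸ hi0)
                simp [hM, hai, hjj0, hii0]
          _ = b j := by simp
    set e : Fin m × Fin n ≃ Fin (m * n) := finProdFinEquiv with he
    have hrowset : ∀ i : Fin m,
        (Finset.univ.filter fun p : Fin (m * n) => (e.symm p).1 = i) =
          Finset.univ.map ⟨fun j => e (i, j), show Function.Injective _ from fun j j' hjj => by
            simpa using congrArg (fun p => (e.symm p).2) hjj⟩ := by
      intro i
      ext p
      simp only [Finset.mem_filter, Finset.mem_univ, true_and, Finset.mem_map,
        Function.Embedding.coeFn_mk]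
      constructor
      · intro hp
        exact ⟨(e.symm p).2, by rw [← hp]; simp⟩
      · rintro ⟨j, rfl⟩
        simp
    have hcolset : ∀ j : Fin n,
        (Finset.univ.filter fun p : Fin (m * n) => (e.symm p).2 = j) =
          Finset.univ.map ⟨fun i => e (i, j), show Function.Injective _ from fun i i' hii => by
            simpa using congrArg (fun p => (e.symm p).1) hii⟩ := by
      intro j
      ext p
      simp only [Finset.mem_filter, Finset.mem_univ, true_and, Finset.mem_map,
        Function.Embedding.coeFn_mk]
      constructor
      · intro hp
        exact ⟨(e.symm p).1, by rw [← hp]; simp⟩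
      · rintro ⟨i, rfl⟩
        simp
    refine ⟨m * n, fun p => M (e.symm p).1 (e.symm p).2,
      fun i => Finset.univ.filter fun p => (e.symm p).1 = i,
      fun j => Finset.univ.filter fun p => (e.symm p).2 = j, ?_, ?_, ?_, ?_, ?_, ?_⟩
    · intro i i' hne
      rw [Finset.disjoint_left]
      intro p hp hp'
      simp only [Finset.mem_filter, Finset.mem_univ, true_and] at hp hp'
      exact hne (hp.symm.trans hp')
    · ext p
      simp only [Finset.mem_biUnion, Finset.mem_univ, iff_true, true_and, Finset.mem_filter]
      exact ⟨(e.symm p).1, rfl⟩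
    · intro j j' hne
      rw [Finset.disjoint_left]
      intro p hp hp'
      simp only [Finset.mem_filter, Finset.mem_univ, true_and] at hp hp'
      exact hne (hp.symm.trans hp')
    · ext p
      simp only [Finset.mem_biUnion, Finset.mem_univ, iff_true, true_and, Finset.mem_filter]
      exact ⟨(e.symm p).2, rfl⟩
    · intro i
      show a i = ∑ p ∈ Finset.univ.filter (fun p => (e.symm p).1 = i),
        M (e.symm p).1 (e.symm p).2
      rw [hrowset i, Finset.sum_map]
      simp only [Function.Embedding.coeFn_mk, Equiv.symm_apply_apply]
      exact (hrow i).symm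
    · intro j
      show b j = ∑ q ∈ Finset.univ.filter (fun p => (e.symm p).2 = j),
        M (e.symm q).1 (e.symm q).2
      rw [hcolset j, Finset.sum_map]
      simp only [Function.Embedding.coeFn_mk, Equiv.symm_apply_apply]
      exact (hcol j).symm
  · -- finite case
    have ha : ∀ i, a i ≠ ⊤ := fun i hi =>
      htop (WithTop.sum_eq_top.2 ⟨i, Finset.mem_univ i, hi⟩)
    have hb : ∀ j, b j ≠ ⊤ := fun j hj =>
      htop (h ▸ WithTop.sum_eq_top.2 ⟨j, Finset.mem_univ j, hj⟩)
    set f : Fin m → ℕ := fun i => (a i).toNat with hf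
    set fb : Fin n → ℕ := fun j => (b j).toNat with hfb
    have hca : ∀ i, (f i : ℕ∞) = a i := fun i => ENat.coe_toNat (ha i)
    have hcb : ∀ j, (fb j : ℕ∞) = b j := fun j => ENat.coe_toNat (hb j)
    set N : ℕ := ∑ i, f i with hNdef
    have hNb : ∑ j, fb j = N := by
      have hcast : ((∑ j, fb j : ℕ) : ℕ∞) = ((N : ℕ) : ℕ∞) := by
        rw [hNdef, Nat.cast_sum, Nat.cast_sum]
        simp only [hca, hcb]
        exact h.symm
      exact_mod_cast hcast
    obtain ⟨I, hIdisj, hIcover, hIcard⟩ := finSide f N rfl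
    obtain ⟨J, hJdisj, hJcover, hJcard⟩ := finSide fb N hNb
    refine ⟨N, fun _ => 1, I, J, hIdisj, hIcover, hJdisj, hJcover, ?_, ?_⟩
    · intro i
      rw [Finset.sum_const, nsmul_eq_mul, mul_one, hIcard i]
      exact (hca i).symm
    · intro j
      rw [Finset.sum_const, nsmul_eq_mul, mul_one, hJcard j]
      exact (hcb j).symm
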